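/- Let ζ_1,…,ζ_n be distinct, p_1,…,p_n arbitrary, and t = ħ^{1/2} invertible in a field. Define the tRS Lax matrix L by L_{ij} = ( ∏_{k ≠ j} (t^{-1}ζ_i − t ζ_k) / ∏_{k ≠ i} (ζ_i − ζ_k) ) p_j. Then det(u·I − L) = Σ_{r=0}^n (−1)^r H_r u^{n−r}, where H_r = Σ_{I ⊂ {1,…,n}, |I| = r} ∏_{i ∈ I, j ∉ I} ((t^{-1}ζ_i − t ζ_j)/(ζ_i − ζ_j)) · ∏_{k ∈ I} p_k. -/

import Mathlib

open Finset


-- helper: product over erase splits into ordered pairs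
lemma prod_erase_pairs {M : Type*} [CommMonoid M] {m : ℕ} (f : Fin m → Fin m → M) :
    (∏ j, ∏ k ∈ univ.erase j, f j k)
      = (∏ i, ∏ j ∈ Ioi i, f j i) * (∏ i, ∏ j ∈ Ioi i, f i j) := by
  have h1 : ∀ j : Fin m, (univ.erase j : Finset (Fin m))
      = (Ioi j).disjUnion (Iio j) (disjoint_Ioi_Iio j) := by
    intro j
    ext k
    simp only [mem_erase, mem_univ, and_true, mem_disjUnion, mem_Ioi, mem_Iio]
    constructor
    · intro h; exact h.symm.lt_or_gt
    · rintro (h | h) <;> [exact h.ne'; exact h.ne]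
  calc (∏ j, ∏ k ∈ univ.erase j, f j k)
      = ∏ j, ((∏ k ∈ Ioi j, f j k) * (∏ k ∈ Iio j, f j k)) := by
        refine prod_congr rfl fun j _ => ?_
        rw [h1 j, prod_disjUnion]
    _ = (∏ j, ∏ k ∈ Ioi j, f j k) * (∏ j, ∏ k ∈ Iio j, f j k) := prod_mul_distrib
    _ = _ := by
        rw [mul_comm]
        congr 1
        exact prod_comm' (fun x y => by simp)

-- core: det of normalized Cauchy-type matrix is 1
lemma core_det {K : Type*} [Field K] (m : ℕ) (ζ : Fin m → K) (hζ : Function.Injective ζ)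
    (t : K) (ht : t ≠ 0) :
    (Matrix.of fun i j : Fin m =>
        (∏ k ∈ univ.erase j, (t⁻¹ * ζ i - t * ζ k)) /
          (∏ k ∈ univ.erase i, (ζ i - ζ k))).det = 1 := by
  rcases Nat.eq_zero_or_pos m with hm | hm
  · subst hm; exact Matrix.det_isEmpty
  classical
  set d : Fin m → K := fun i => ∏ k ∈ univ.erase i, (ζ i - ζ k) with hd
  have hdne : ∀ i, d i ≠ 0 := by
    intro i
    refine prod_ne_zero_iff.mpr fun k hk => sub_ne_zero.mpr fun h => ?_
    exact (mem_erase.mp hk).1 ((hζ h).symm)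
  set P : Fin m → Polynomial K := fun j =>
    ∏ k ∈ univ.erase j, (Polynomial.C t⁻¹ * Polynomial.X - Polynomial.C (t * ζ k)) with hP
  have hPdeg : ∀ j, (P j).natDegree < m := by
    intro j
    calc (P j).natDegree ≤ ∑ k ∈ univ.erase j,
          (Polynomial.C t⁻¹ * Polynomial.X - Polynomial.C (t * ζ k)).natDegree :=
        Polynomial.natDegree_prod_le _ _
      _ ≤ ∑ _k ∈ univ.erase j, 1 := by
          refine sum_le_sum fun k _ => ?_
          refine le_trans (Polynomial.natDegree_sub_le _ _) (max_le ?_ ?_)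
          · exact le_trans (Polynomial.natDegree_C_mul_le _ _) Polynomial.natDegree_X_le
          · simp only [Polynomial.natDegree_C]; omega
      _ = (univ.erase j).card := by simp
      _ < m := by
          rw [card_erase_of_mem (mem_univ j)]
          simp only [card_univ, Fintype.card_fin]
          omega
  have hPeval : ∀ (x : K) (j : Fin m),
      (P j).eval x = ∏ k ∈ univ.erase j, (t⁻¹ * x - t * ζ k) := by
    intro x j
    simp [hP, Polynomial.eval_prod]
  set Cm : Matrix (Fin m) (Fin m) K := Matrix.of fun k j => (P j).coeff (k : ℕ) with hCm
  have hfac : ∀ (x : Fin m → K),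
      (Matrix.of fun i j => (P j).eval (x i)) = Matrix.vandermonde x * Cm := by
    intro x
    ext i j
    rw [Matrix.mul_apply, Matrix.of_apply, Polynomial.eval_eq_sum_range' (hPdeg j),
      ← Fin.sum_univ_eq_sum_range]
    exact Finset.sum_congr rfl fun k _ => by
      simp [Matrix.vandermonde, hCm, mul_comm]
  set A : Matrix (Fin m) (Fin m) K :=
    Matrix.of fun i j => ∏ k ∈ univ.erase j, (t⁻¹ * ζ i - t * ζ k) with hA
  have hAfac : A = Matrix.vandermonde ζ * Cm := by
    rw [← hfac ζ]
    ext i j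
    simp [hA, hPeval]
  set η : Fin m → K := fun l => t ^ 2 * ζ l with hη
  have hηfac : Matrix.vandermonde η * Cm
      = Matrix.diagonal (fun j => ∏ k ∈ univ.erase j, (t * (ζ j - ζ k))) := by
    rw [← hfac η]
    ext l j
    rw [Matrix.of_apply, hPeval]
    have hentry : ∀ k : Fin m, t⁻¹ * η l - t * ζ k = t * (ζ l - ζ k) := by
      intro k
      simp only [hη]
      field_simp
    rw [prod_congr rfl fun k _ => hentry k]
    rcases eq_or_ne l j with rfl | hlj
    · rw [Matrix.diagonal_apply_eq]
    · rw [Matrix.diagonal_apply_ne _ hlj]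
      refine prod_eq_zero (mem_erase.mpr ⟨hlj, mem_univ l⟩) ?_
      simp
  have hVζ : (Matrix.vandermonde ζ).det ≠ 0 := by
    rw [Matrix.det_vandermonde]
    refine prod_ne_zero_iff.mpr fun i _ => prod_ne_zero_iff.mpr fun j hj => ?_
    exact sub_ne_zero.mpr fun h => (mem_Ioi.mp hj).ne' (hζ h)
  have hVη : (Matrix.vandermonde η).det ≠ 0 := by
    rw [Matrix.det_vandermonde]
    refine prod_ne_zero_iff.mpr fun i _ => prod_ne_zero_iff.mpr fun j hj => ?_
    refine sub_ne_zero.mpr fun h => (mem_Ioi.mp hj).ne' (hζ ?_)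
    have ht2 : t ^ 2 ≠ 0 := pow_ne_zero 2 ht
    exact mul_right_injective₀ ht2 h
  -- the key combinatorial identity
  have key : (Matrix.vandermonde ζ).det * (∏ j, ∏ k ∈ univ.erase j, (t * (ζ j - ζ k)))
      = (Matrix.vandermonde η).det * (∏ i, d i) := by
    rw [Matrix.det_vandermonde, Matrix.det_vandermonde,
      prod_erase_pairs (fun j k => t * (ζ j - ζ k))]
    have hdexp : (∏ i, d i)
        = (∏ i, ∏ j ∈ Ioi i, (ζ j - ζ i)) * (∏ i, ∏ j ∈ Ioi i, (ζ i - ζ j)) :=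
      prod_erase_pairs (fun j k => ζ j - ζ k)
    rw [hdexp]
    simp only [← prod_mul_distrib, hη]
    exact prod_congr rfl fun i _ => prod_congr rfl fun j _ => by ring
  -- now assemble
  have hdetA : A.det = (Matrix.vandermonde ζ).det * Cm.det := by rw [hAfac, Matrix.det_mul]
  have hdetD : (Matrix.vandermonde η).det * Cm.det
      = ∏ j, ∏ k ∈ univ.erase j, (t * (ζ j - ζ k)) := by
    rw [← Matrix.det_mul, hηfac, Matrix.det_diagonal]
  have hsplit : (Matrix.of fun i j : Fin m =>
        (∏ k ∈ univ.erase j, (t⁻¹ * ζ i - t * ζ k)) /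
          (∏ k ∈ univ.erase i, (ζ i - ζ k)))
      = Matrix.of fun i j => (fun i => (d i)⁻¹) i * A i j := by
    ext i j
    rw [Matrix.of_apply, Matrix.of_apply]
    rw [div_eq_mul_inv, mul_comm]
    rfl
  rw [hsplit, Matrix.det_mul_column, hdetA]
  have hprodd : (∏ i, (d i)⁻¹) = (∏ i, d i)⁻¹ := by
    rw [← prod_inv_distrib]
  rw [hprodd]
  have h1 : (∏ i, d i) ≠ 0 := prod_ne_zero_iff.mpr fun i _ => hdne i
  have hCmdet : Cm.det = (∏ j, ∏ k ∈ univ.erase j, (t * (ζ j - ζ k))) / (Matrix.vandermonde η).det := by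
    rw [eq_div_iff hVη]
    linear_combination hdetD
  rw [hCmdet]
  field_simp
  linear_combination key

-- determinant of piecewise identity rows
lemma det_piecewise_one {K : Type*} [CommRing K] {ι : Type*} [DecidableEq ι] [Fintype ι]
    (s : Finset ι) (M : Matrix ι ι K) :
    (Matrix.of (s.piecewise (fun i => (1 : Matrix ι ι K) i) (fun i => M i))).det
      = (M.submatrix (fun i : {x // x ∈ sᶜ} => (i : ι)) (fun j : {x // x ∈ sᶜ} => (j : ι))).det := by
  classical
  let e : {x // x ∈ s} ⊕ {x // x ∈ sᶜ} ≃ ι :=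
    (Equiv.sumCongr (Equiv.refl _) (Equiv.subtypeEquivRight (fun x => by simp))).trans
      (Equiv.sumCompl (· ∈ s))
  have he1 : ∀ i : {x // x ∈ s}, e (Sum.inl i) = (i : ι) := fun i => rfl
  have he2 : ∀ j : {x // x ∈ sᶜ}, e (Sum.inr j) = (j : ι) := fun j => rfl
  rw [← Matrix.det_submatrix_equiv_self e]
  have hblocks : (Matrix.of (s.piecewise (fun i => (1 : Matrix ι ι K) i) (fun i => M i))).submatrix e e
      = Matrix.fromBlocks 1 0
          (M.submatrix (fun i : {x // x ∈ sᶜ} => (i : ι)) (fun j : {x // x ∈ s} => (j : ι)))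
          (M.submatrix (fun i : {x // x ∈ sᶜ} => (i : ι)) (fun j : {x // x ∈ sᶜ} => (j : ι))) := by
    ext i j
    cases i with
    | inl i =>
      have hi : (i : ι) ∈ s := i.2
      cases j with
      | inl j =>
        simp only [Matrix.submatrix_apply, he1, Matrix.of_apply,
          Finset.piecewise_eq_of_mem _ _ _ hi, Matrix.fromBlocks_apply₁₁]
        rw [Matrix.one_apply, Matrix.one_apply]
        exact if_congr Subtype.ext_iff.symm rfl rfl
      | inr j =>
        have hj : (j : ι) ∈ sᶜ := j.2
        simp only [Matrix.submatrix_apply, he1, he2, Matrix.of_apply,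
          Finset.piecewise_eq_of_mem _ _ _ hi, Matrix.fromBlocks_apply₁₂]
        rw [Matrix.one_apply_ne]
        · rfl
        · intro h
          rw [h] at hi
          exact (mem_compl.mp hj) hi
    | inr i =>
      have hi : (i : ι) ∉ s := mem_compl.mp i.2
      cases j with
      | inl j =>
        simp only [Matrix.submatrix_apply, he1, he2, Matrix.of_apply,
          Finset.piecewise_eq_of_notMem _ _ _ hi, Matrix.fromBlocks_apply₂₁]
      | inr j =>
        simp only [Matrix.submatrix_apply, he2, Matrix.of_apply,
          Finset.piecewise_eq_of_notMem _ _ _ hi, Matrix.fromBlocks_apply₂₂]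
  rw [hblocks, Matrix.det_fromBlocks_zero₁₂, Matrix.det_one, one_mul]

-- expansion of det(u•1 + M) over subsets
lemma det_smul_one_add {K : Type*} [CommRing K] {ι : Type*} [DecidableEq ι] [Fintype ι]
    (u : K) (M : Matrix ι ι K) :
    (u • (1 : Matrix ι ι K) + M).det
      = ∑ s : Finset ι, u ^ s.card *
          (M.submatrix (fun i : {x // x ∈ sᶜ} => (i : ι)) (fun j : {x // x ∈ sᶜ} => (j : ι))).det := by
  classical
  have hrows : (u • (1 : Matrix ι ι K) + M)
      = (fun i => u • (1 : Matrix ι ι K) i) + (fun i => M i) := by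
    ext i j
    simp [Matrix.add_apply, Matrix.smul_apply]
  have hdet : (u • (1 : Matrix ι ι K) + M).det
      = Matrix.detRowAlternating ((fun i => u • (1 : Matrix ι ι K) i) + (fun i => M i)) := by
    rw [← hrows]
    rfl
  rw [hdet]
  rw [show (Matrix.detRowAlternating ((fun i => u • (1 : Matrix ι ι K) i) + (fun i => M i)) : K)
      = (Matrix.detRowAlternating : (ι → K) [⋀^ι]→ₗ[K] K).toMultilinearMap
          ((fun i => u • (1 : Matrix ι ι K) i) + (fun i => M i)) from rfl]
  rw [MultilinearMap.map_add_univ]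
  refine Finset.sum_congr rfl fun s _ => ?_
  -- pull out the scalar u from rows in s
  have hpw : s.piecewise (fun i => u • (1 : Matrix ι ι K) i) (fun i => M i)
      = s.piecewise
          (fun i => u • (s.piecewise (fun i => (1 : Matrix ι ι K) i) (fun i => M i)) i)
          (s.piecewise (fun i => (1 : Matrix ι ι K) i) (fun i => M i)) := by
    funext i
    by_cases hi : i ∈ s
    · simp [Finset.piecewise_eq_of_mem _ _ _ hi]
    · simp [Finset.piecewise_eq_of_notMem _ _ _ hi]
  rw [hpw, (Matrix.detRowAlternating : (ι → K) [⋀^ι]→ₗ[K] K).toMultilinearMap.map_piecewise_smul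
    (fun _ => u) _ s]
  rw [Finset.prod_const, smul_eq_mul]
  congr 1
  exact det_piecewise_one s M

/-- The trigonometric Ruijsenaars–Schneider Lax matrix
L_{ij} = (∏_{k≠j}(t⁻¹ζ_i − tζ_k) / ∏_{k≠i}(ζ_i − ζ_k)) p_j, with t = ħ^{1/2}. -/
noncomputable def tRSLax {K : Type*} [Field K] (n : ℕ) (ζ p : Fin n → K) (t : K) :
    Matrix (Fin n) (Fin n) K :=
  Matrix.of fun i j =>
    ((∏ k ∈ univ.erase j, (t⁻¹ * ζ i - t * ζ k)) /
      (∏ k ∈ univ.erase i, (ζ i - ζ k))) * p j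

/-- The tRS Hamiltonians H_r. -/
noncomputable def tRSHam {K : Type*} [Field K] (n : ℕ) (ζ p : Fin n → K) (t : K) (r : ℕ) : K :=
  ∑ I ∈ powersetCard r (univ : Finset (Fin n)),
    (∏ i ∈ I, ∏ j ∈ Iᶜ, ((t⁻¹ * ζ i - t * ζ j) / (ζ i - ζ j))) * ∏ k ∈ I, p k

lemma minor_det {K : Type*} [Field K] {n : ℕ} (ζ p : Fin n → K) (t : K)
    (hζ : Function.Injective ζ) (ht : t ≠ 0) (T : Finset (Fin n)) :
    ((tRSLax n ζ p t).submatrix (fun i : {x // x ∈ T} => (i : Fin n))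
        (fun j : {x // x ∈ T} => (j : Fin n))).det
      = (∏ i ∈ T, ∏ j ∈ Tᶜ, ((t⁻¹ * ζ i - t * ζ j) / (ζ i - ζ j))) * ∏ k ∈ T, p k := by
  classical
  set m := T.card with hm
  let e : Fin m ≃ {x // x ∈ T} := T.equivFin.symm
  rw [← Matrix.det_submatrix_equiv_self e, Matrix.submatrix_submatrix]
  set σ : Fin m → Fin n := fun i => ((e i : {x // x ∈ T}) : Fin n) with hσ
  have hσinj : Function.Injective σ :=
    Subtype.coe_injective.comp e.injective
  have hσT : ∀ i, σ i ∈ T := fun i => (e i).2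
  have himg : Finset.image σ univ = T := by
    rw [show σ = Subtype.val ∘ (fun i => e i) from rfl, ← Finset.image_image,
      Finset.image_univ_equiv, univ_eq_attach, attach_image_val]
  have hsplit : ∀ x ∈ T, (univ : Finset (Fin n)).erase x = (T.erase x) ∪ Tᶜ := by
    intro x hx
    rw [← union_compl T, erase_union_distrib, erase_eq_of_notMem (s := Tᶜ) (by simp [hx])]
  have hdisj : ∀ x : Fin n, Disjoint (T.erase x) Tᶜ :=
    fun x => disjoint_compl_right.mono_left (erase_subset x T)
  have herase : ∀ j : Fin m, T.erase (σ j) = Finset.image σ (univ.erase j) := by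
    intro j
    rw [Finset.image_erase hσinj, himg]
  set c : Fin m → K := fun i => ∏ k ∈ Tᶜ, (t⁻¹ * ζ (σ i) - t * ζ k) with hc
  set dC : Fin m → K := fun i => ∏ k ∈ Tᶜ, (ζ (σ i) - ζ k) with hdC
  have hBmat : (tRSLax n ζ p t).submatrix ((fun i : {x // x ∈ T} => (i : Fin n)) ∘ e)
        ((fun j : {x // x ∈ T} => (j : Fin n)) ∘ e)
      = Matrix.of fun i j => (fun i => c i / dC i) i *
          ((fun j => p (σ j)) j *
            ((∏ l ∈ univ.erase j, (t⁻¹ * ζ (σ i) - t * ζ (σ l))) /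
              (∏ l ∈ univ.erase i, (ζ (σ i) - ζ (σ l))))) := by
    ext i j
    simp only [Matrix.submatrix_apply, tRSLax, Matrix.of_apply, Function.comp]
    have h1 : (∏ k ∈ (univ : Finset (Fin n)).erase (σ j), (t⁻¹ * ζ (σ i) - t * ζ k))
        = (∏ l ∈ univ.erase j, (t⁻¹ * ζ (σ i) - t * ζ (σ l))) * c i := by
      rw [hsplit (σ j) (hσT j), prod_union (hdisj (σ j)), herase j,
        prod_image (fun a _ b _ h => hσinj h)]
    have h2 : (∏ k ∈ (univ : Finset (Fin n)).erase (σ i), (ζ (σ i) - ζ k))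
        = (∏ l ∈ univ.erase i, (ζ (σ i) - ζ (σ l))) * dC i := by
      rw [hsplit (σ i) (hσT i), prod_union (hdisj (σ i)), herase i,
        prod_image (fun a _ b _ h => hσinj h)]
    rw [h1, h2, mul_div_mul_comm]
    ring
  rw [hBmat]
  erw [Matrix.det_mul_column]
  rw [show (Matrix.det fun i j : Fin m =>
        (fun j => p (σ j)) j *
          ((∏ l ∈ univ.erase j, (t⁻¹ * ζ (σ i) - t * ζ (σ l))) /
            ∏ l ∈ univ.erase i, (ζ (σ i) - ζ (σ l))))
      = (Matrix.of fun i j : Fin m =>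
          (fun j => p (σ j)) j *
            ((∏ l ∈ univ.erase j, (t⁻¹ * ζ (σ i) - t * ζ (σ l))) /
              ∏ l ∈ univ.erase i, (ζ (σ i) - ζ (σ l)))).det from rfl]
  erw [Matrix.det_mul_row]
  have hcore : (Matrix.of fun i j : Fin m =>
      ((∏ l ∈ univ.erase j, (t⁻¹ * ζ (σ i) - t * ζ (σ l))) /
        (∏ l ∈ univ.erase i, (ζ (σ i) - ζ (σ l))))).det = 1 :=
    core_det m (ζ ∘ σ) (hζ.comp hσinj) t ht
  have hmatch : (Matrix.det fun i j : Fin m =>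
        (∏ l ∈ univ.erase j, (t⁻¹ * ζ (σ i) - t * ζ (σ l))) /
          (∏ l ∈ univ.erase i, (ζ (σ i) - ζ (σ l)))) = 1 := hcore
  rw [hmatch, mul_one]
  have hp : (∏ j, p (σ j)) = ∏ k ∈ T, p k := by
    rw [← himg, prod_image (fun a _ b _ h => hσinj h)]
  have hq : (∏ i, c i / dC i)
      = ∏ i ∈ T, ∏ j ∈ Tᶜ, ((t⁻¹ * ζ i - t * ζ j) / (ζ i - ζ j)) := by
    refine Finset.prod_bij (fun (a : Fin m) _ => σ a) (fun a _ => hσT a)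
      (fun a _ b _ h => hσinj h) (fun b hb => ?_) (fun a _ => ?_)
    · obtain ⟨a, _, ha⟩ := Finset.mem_image.mp (himg ▸ hb)
      exact ⟨a, mem_univ a, ha⟩
    · rw [hc, hdC, ← prod_div_distrib]
  rw [hp, hq]

/-- det(u·I − L) = Σ_{r=0}^n (−1)^r H_r u^{n−r}. -/
theorem stmt4 {K : Type*} [Field K] (n : ℕ) (ζ p : Fin n → K) (t : K)
    (hζ : Function.Injective ζ) (hζ0 : ∀ i, ζ i ≠ 0) (ht : t ≠ 0) (u : K) :
    (u • (1 : Matrix (Fin n) (Fin n) K) - tRSLax n ζ p t).det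
      = ∑ r ∈ Finset.range (n + 1), (-1 : K) ^ r * tRSHam n ζ p t r * u ^ (n - r) := by
  classical
  rw [sub_eq_add_neg, det_smul_one_add]
  have hterm : ∀ s : Finset (Fin n),
      u ^ s.card * ((-(tRSLax n ζ p t)).submatrix (fun i : {x // x ∈ sᶜ} => (i : Fin n))
          (fun j : {x // x ∈ sᶜ} => (j : Fin n))).det
        = u ^ s.card * ((-1 : K) ^ sᶜ.card *
            ((∏ i ∈ sᶜ, ∏ j ∈ sᶜᶜ, ((t⁻¹ * ζ i - t * ζ j) / (ζ i - ζ j))) * ∏ k ∈ sᶜ, p k)) := by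
    intro s
    congr 1
    have h1 : (-(tRSLax n ζ p t)).submatrix (fun i : {x // x ∈ sᶜ} => (i : Fin n))
        (fun j : {x // x ∈ sᶜ} => (j : Fin n))
        = -((tRSLax n ζ p t).submatrix (fun i : {x // x ∈ sᶜ} => (i : Fin n))
          (fun j : {x // x ∈ sᶜ} => (j : Fin n))) := rfl
    rw [h1, Matrix.det_neg, Fintype.card_coe, minor_det ζ p t hζ ht]
  rw [Finset.sum_congr rfl fun s _ => hterm s]
  set g : Finset (Fin n) → K := fun T => u ^ Tᶜ.card * ((-1 : K) ^ T.card *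
      ((∏ i ∈ T, ∏ j ∈ Tᶜ, ((t⁻¹ * ζ i - t * ζ j) / (ζ i - ζ j))) * ∏ k ∈ T, p k)) with hg
  have hbij : Function.Bijective (fun s : Finset (Fin n) => sᶜ) :=
    Function.Involutive.bijective fun s => compl_compl s
  have hsum1 : (∑ s : Finset (Fin n), u ^ s.card * ((-1 : K) ^ sᶜ.card *
      ((∏ i ∈ sᶜ, ∏ j ∈ sᶜᶜ, ((t⁻¹ * ζ i - t * ζ j) / (ζ i - ζ j))) * ∏ k ∈ sᶜ, p k)))
      = ∑ T : Finset (Fin n), g T := by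
    refine Fintype.sum_bijective _ hbij _ g fun s => ?_
    rw [hg]
    simp only [compl_compl]
  rw [hsum1]
  have hsum2 : (∑ T : Finset (Fin n), g T) = ∑ T ∈ (univ : Finset (Fin n)).powerset, g T := by
    rw [powerset_univ]
  rw [hsum2, powerset_card_disjiUnion]
  erw [sum_disjiUnion]
  have hcard : (univ : Finset (Fin n)).card = n := by simp
  rw [show ((univ : Finset (Fin n)).card + 1) = n + 1 from by rw [hcard]]
  refine Finset.sum_congr rfl fun r hr => ?_
  rw [tRSHam, Finset.mul_sum, Finset.sum_mul]
  refine Finset.sum_congr rfl fun T hT => ?_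
  obtain ⟨-, hTcard⟩ := mem_powersetCard.mp hT
  simp only [hg]
  rw [card_compl, hTcard, Fintype.card_fin]
  ring
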